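/- Let B_r = ℚ[t]/(t^r) for r ≥ 1. Then the natural quotient map induces the zero map on first André–Quillen homology D_1^ℚ(B_{2r}) → D_1^ℚ(B_r). -/

import Mathlib

open Polynomial Algebra

set_option linter.unusedVariables false
set_option linter.unusedSectionVars false

section Aux

variable (r : ℕ)

local notation "A" => (ℚ[X] ⧸ Ideal.span {(X : ℚ[X]) ^ (2 * r)})
local notation "B" => (ℚ[X] ⧸ Ideal.span {(X : ℚ[X]) ^ r})

noncomputable def PA : Extension ℚ A :=
  Extension.ofSurjective (Ideal.Quotient.mkₐ ℚ _)
    (fun x => Quot.inductionOn x fun p => ⟨p, rfl⟩)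

noncomputable def PB : Extension ℚ B :=
  Extension.ofSurjective (Ideal.Quotient.mkₐ ℚ _)
    (fun x => Quot.inductionOn x fun p => ⟨p, rfl⟩)

lemma PA_algebraMap (p : ℚ[X]) :
    algebraMap (PA r).Ring A p = Ideal.Quotient.mk _ p := rfl

lemma PB_algebraMap (p : ℚ[X]) :
    algebraMap (PB r).Ring B p = Ideal.Quotient.mk _ p := rfl

/-- hom from the self-generators extension of `A` to `PA` -/
noncomputable def uHom : Extension.Hom (Generators.self ℚ A).toExtension (PA r) where
  toRingHom := (MvPolynomial.aeval (R := ℚ) (PA r).σ).toRingHom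
  toRingHom_algebraMap x := by
    show (MvPolynomial.aeval (R := ℚ) (PA r).σ) (algebraMap ℚ _ x) = _
    rw [AlgHom.commutes]
    simp
  algebraMap_toRingHom x := by
    have h2 : ((Ideal.Quotient.mkₐ ℚ (Ideal.span {(X : ℚ[X]) ^ (2*r)})).comp
        (MvPolynomial.aeval (R := ℚ) (PA r).σ)) =
        MvPolynomial.aeval (Generators.self ℚ A).val := by
      apply MvPolynomial.algHom_ext
      intro a
      rw [AlgHom.comp_apply]
      erw [MvPolynomial.aeval_X]
      rw [MvPolynomial.aeval_X]
      exact (PA r).algebraMap_σ a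
    have := DFunLike.congr_fun h2 x
    exact this

variable [Algebra (ℚ[X] ⧸ Ideal.span {(X : ℚ[X]) ^ (2 * r)}) (ℚ[X] ⧸ Ideal.span {(X : ℚ[X]) ^ r})]
variable [IsScalarTower ℚ (ℚ[X] ⧸ Ideal.span {(X : ℚ[X]) ^ (2 * r)}) (ℚ[X] ⧸ Ideal.span {(X : ℚ[X]) ^ r})]
variable (halg : ∀ p : ℚ[X], algebraMap (ℚ[X] ⧸ Ideal.span {(X : ℚ[X]) ^ (2 * r)}) (ℚ[X] ⧸ Ideal.span {(X : ℚ[X]) ^ r}) (Ideal.Quotient.mk _ p) = Ideal.Quotient.mk _ p)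

/-- the identity of `ℚ[X]` as a hom from `PA` to `PB` -/
noncomputable def hHom : Extension.Hom (PA r) (PB r) where
  toRingHom := RingHom.id ℚ[X]
  toRingHom_algebraMap x := rfl
  algebraMap_toRingHom x := (halg x).symm

/-- hom from `PB` to the self-generators extension of `B` -/
noncomputable def vHom : Extension.Hom (PB r) (Generators.self ℚ B).toExtension where
  toRingHom := (Polynomial.aeval (R := ℚ)
    (MvPolynomial.X (Ideal.Quotient.mk (Ideal.span {(X : ℚ[X]) ^ r}) X))).toRingHom
  toRingHom_algebraMap x := by
    exact (Polynomial.aeval (R := ℚ)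
      (MvPolynomial.X (Ideal.Quotient.mk (Ideal.span {(X : ℚ[X]) ^ r}) X))).commutes x
  algebraMap_toRingHom x := by
    have h2 : ((MvPolynomial.aeval (R := ℚ) (Generators.self ℚ B).val).comp
        (Polynomial.aeval (R := ℚ)
          (MvPolynomial.X (Ideal.Quotient.mk (Ideal.span {(X : ℚ[X]) ^ r}) X)))) =
        Ideal.Quotient.mkₐ ℚ _ := by
      apply Polynomial.algHom_ext
      simp
    have := DFunLike.congr_fun h2 x
    exact this


lemma ker_PA : (PA r).ker = Ideal.span {(X : ℚ[X]) ^ (2 * r)} := by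
  show RingHom.ker (Ideal.Quotient.mk (Ideal.span {(X : ℚ[X]) ^ (2 * r)})) = _
  exact Ideal.mk_ker

lemma ker_PB : (PB r).ker = Ideal.span {(X : ℚ[X]) ^ r} := by
  show RingHom.ker (Ideal.Quotient.mk (Ideal.span {(X : ℚ[X]) ^ r})) = _
  exact Ideal.mk_ker

lemma cot_map_zero (x : (PA r).Cotangent) :
    Extension.Cotangent.map (hHom r halg) x = 0 := by
  obtain ⟨y, rfl⟩ := Extension.Cotangent.mk_surjective x
  rw [Extension.Cotangent.map_mk]
  apply Extension.Cotangent.ext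
  rw [Extension.Cotangent.val_mk]
  show Ideal.toCotangent _ _ = 0
  rw [Ideal.toCotangent_eq_zero]
  show (hHom r halg).toAlgHom y.1 ∈ (PB r).ker ^ 2
  have h1 : (hHom r halg).toAlgHom y.1 = y.1 := rfl
  rw [h1, ker_PB]
  have hy : (y.1 : ℚ[X]) ∈ Ideal.span {(X : ℚ[X]) ^ r} ^ 2 := by
    rw [Ideal.span_singleton_pow, ← pow_mul, mul_comm r 2]
    exact (SetLike.ext_iff.mp (ker_PA r) _).mp y.2
  exact hy

include halg in
lemma main_aux :
    Algebra.H1Cotangent.map ℚ ℚ (ℚ[X] ⧸ Ideal.span {(X : ℚ[X]) ^ (2 * r)})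
      (ℚ[X] ⧸ Ideal.span {(X : ℚ[X]) ^ r}) = 0 := by
  haveI : IsScalarTower (ℚ[X] ⧸ Ideal.span {(X : ℚ[X]) ^ (2 * r)})
      (ℚ[X] ⧸ Ideal.span {(X : ℚ[X]) ^ (2 * r)}) (ℚ[X] ⧸ Ideal.span {(X : ℚ[X]) ^ r}) :=
    @IsScalarTower.of_algebraMap_eq (ℚ[X] ⧸ Ideal.span {(X : ℚ[X]) ^ (2 * r)})
      (ℚ[X] ⧸ Ideal.span {(X : ℚ[X]) ^ (2 * r)}) (ℚ[X] ⧸ Ideal.span {(X : ℚ[X]) ^ r}) _ _ _ _ _ _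
      (fun x => rfl)
  rw [Algebra.H1Cotangent.map,
    Extension.H1Cotangent.map_eq _ ((vHom r).comp ((hHom r halg).comp (uHom r)))]
  ext x
  rw [Extension.H1Cotangent.map_comp, Extension.H1Cotangent.map_comp]
  simp only [LinearMap.coe_comp, LinearMap.coe_restrictScalars, Function.comp_apply]
  have hz : Extension.H1Cotangent.map (hHom r halg)
      (Extension.H1Cotangent.map (uHom r) x) = 0 := by
    apply Extension.h1Cotangentι_ext
    exact cot_map_zero r halg _
  rw [hz, map_zero]
  rfl

end Aux


/-- For `B_r = ℚ[t]/(t^r)`, the natural surjection `B_{2r} → B_r` (sending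
`t ↦ t`) induces the zero map on first André–Quillen homology
`D₁^ℚ(B_{2r}) → D₁^ℚ(B_r)` (formalized as `H¹` of the cotangent complex). -/
theorem stmt5 (r : ℕ) (hr : 1 ≤ r)
    (f : (ℚ[X] ⧸ Ideal.span {(X : ℚ[X]) ^ (2 * r)}) →ₐ[ℚ]
         (ℚ[X] ⧸ Ideal.span {(X : ℚ[X]) ^ r}))
    (hf : f (Ideal.Quotient.mk _ X) = Ideal.Quotient.mk _ X) :
    letI : Algebra (ℚ[X] ⧸ Ideal.span {(X : ℚ[X]) ^ (2 * r)})
        (ℚ[X] ⧸ Ideal.span {(X : ℚ[X]) ^ r}) := f.toRingHom.toAlgebra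
    haveI : IsScalarTower ℚ (ℚ[X] ⧸ Ideal.span {(X : ℚ[X]) ^ (2 * r)})
        (ℚ[X] ⧸ Ideal.span {(X : ℚ[X]) ^ r}) :=
      IsScalarTower.of_algebraMap_eq' (f.comp_algebraMap).symm
    Algebra.H1Cotangent.map ℚ ℚ (ℚ[X] ⧸ Ideal.span {(X : ℚ[X]) ^ (2 * r)})
      (ℚ[X] ⧸ Ideal.span {(X : ℚ[X]) ^ r}) = 0 := by
  letI : Algebra (ℚ[X] ⧸ Ideal.span {(X : ℚ[X]) ^ (2 * r)})
      (ℚ[X] ⧸ Ideal.span {(X : ℚ[X]) ^ r}) := f.toRingHom.toAlgebra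
  haveI : IsScalarTower ℚ (ℚ[X] ⧸ Ideal.span {(X : ℚ[X]) ^ (2 * r)})
      (ℚ[X] ⧸ Ideal.span {(X : ℚ[X]) ^ r}) :=
    IsScalarTower.of_algebraMap_eq' (f.comp_algebraMap).symm
  have halg : ∀ p : ℚ[X],
      algebraMap (ℚ[X] ⧸ Ideal.span {(X : ℚ[X]) ^ (2 * r)})
        (ℚ[X] ⧸ Ideal.span {(X : ℚ[X]) ^ r})
        (Ideal.Quotient.mk (Ideal.span {(X : ℚ[X]) ^ (2 * r)}) p) =
      Ideal.Quotient.mk (Ideal.span {(X : ℚ[X]) ^ r}) p := by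
    intro p
    have h2 : f.comp (Ideal.Quotient.mkₐ ℚ (Ideal.span {(X : ℚ[X]) ^ (2 * r)})) =
        Ideal.Quotient.mkₐ ℚ (Ideal.span {(X : ℚ[X]) ^ r}) :=
      Polynomial.algHom_ext (by simpa using hf)
    exact DFunLike.congr_fun h2 p
  exact main_aux r halg
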